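/- arXiv:1705.06802 — 3 statements merged into one kernel-verified Lean document; each statement's English description precedes it below -/
import Mathlib

section
/- Let z_1,...,z_n be distinct points on the unit circle with nodal polynomial W_n(z) = ∏_{j=1}^n (z - z_j). Suppose there are positive constants B and L such that for all z on the unit circle: B ≤ |W_n'(z)|/n for each node z = z_j, and (|W_n(z)|²/n²) ∑_{j=1}^n 1/|z - z_j|² ≤ L. Then for every z on the unit circle with z ≠ z_j for all j, ∑_{j=1}^n |W_n(z)| / (|W_n'(z_j)| |z - z_j|) ≤ (√L / B) √n. -/
open Finset

theorem stmt1 (n : ℕ) (hn : 0 < n) (z : Fin n → ℂ)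
    (hz : ∀ j, ‖z j‖ = 1) (hinj : Function.Injective z)
    (W : ℂ → ℂ) (hW : W = fun w => ∏ j, (w - z j))
    (B L : ℝ) (hB : 0 < B) (hL : 0 < L)
    (h1 : ∀ j, B ≤ ‖deriv W (z j)‖ / n)
    (h2 : ∀ w : ℂ, ‖w‖ = 1 →
      (‖W w‖) ^ 2 / (n : ℝ) ^ 2 *
        ∑ j, 1 / (‖w - z j‖) ^ 2 ≤ L) :
    ∀ w : ℂ, ‖w‖ = 1 → (∀ j, w ≠ z j) →
      ∑ j, ‖W w‖ /
          (‖deriv W (z j)‖ * ‖w - z j‖)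
        ≤ Real.sqrt L / B * Real.sqrt n := by
  intro w hw hne
  have hn' : (0:ℝ) < n := Nat.cast_pos.mpr hn
  set A := ‖W w‖ with hA
  have hApos : 0 ≤ A := norm_nonneg _
  have hwz : ∀ j, 0 < ‖w - z j‖ := fun j => by
    simpa [norm_pos_iff, sub_ne_zero] using hne j
  set a : Fin n → ℝ := fun j => A / (n * ‖w - z j‖) with ha
  have hanneg : ∀ j, 0 ≤ a j := fun j => by
    have := hwz j; positivity
  -- Step 1: termwise bound
  have step1 : ∑ j, A / (‖deriv W (z j)‖ * ‖w - z j‖)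
      ≤ (∑ j, a j) / B := by
    rw [Finset.sum_div]
    apply Finset.sum_le_sum
    intro j _
    have hBn : B * n ≤ ‖deriv W (z j)‖ := by
      have := h1 j
      rw [le_div_iff₀ hn'] at this; linarith
    have hcj := hwz j
    have heq : a j / B = A / (↑n * ‖w - z j‖ * B) := div_div _ _ _
    rw [heq]
    apply div_le_div_of_nonneg_left hApos (by positivity)
    have hre : (n:ℝ) * ‖w - z j‖ * B
        = B * n * ‖w - z j‖ := by ring
    rw [hre]
    exact mul_le_mul_of_nonneg_right hBn hcj.le
  -- Step 2: sum of squares bound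
  have hsumsq : ∑ j, (a j) ^ 2 ≤ L := by
    have h2' := h2 w hw
    have hrw : ∑ j, (a j) ^ 2
        = A ^ 2 / (n:ℝ)^2 * ∑ j, 1 / (‖w - z j‖) ^ 2 := by
      rw [Finset.mul_sum]
      apply Finset.sum_congr rfl
      intro j _
      have hj := (hwz j).ne'
      simp only [ha]
      rw [div_pow, mul_pow, mul_one_div, div_div]
    rw [hrw]
    exact h2'
  -- Cauchy–Schwarz
  have hcs : (∑ j, a j) ^ 2 ≤ (n : ℝ) * L := by
    have h := Finset.sum_mul_sq_le_sq_mul_sq Finset.univ (fun _ => (1:ℝ)) a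
    simp only [one_mul, one_pow, Finset.sum_const, Finset.card_univ,
      Fintype.card_fin, nsmul_eq_mul, mul_one] at h
    exact h.trans (mul_le_mul_of_nonneg_left hsumsq hn'.le)
  have hsum_le : ∑ j, a j ≤ Real.sqrt L * Real.sqrt n := by
    rw [← Real.sqrt_mul hL.le]
    have hnonneg : 0 ≤ ∑ j, a j := Finset.sum_nonneg fun j _ => hanneg j
    refine (Real.le_sqrt hnonneg (by positivity)).mpr ?_
    calc (∑ j, a j) ^ 2 ≤ (n:ℝ) * L := hcs
      _ = L * n := by ring
  calc ∑ j, A / (‖deriv W (z j)‖ * ‖w - z j‖)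
      ≤ (∑ j, a j) / B := step1
    _ ≤ Real.sqrt L * Real.sqrt n / B := by
        gcongr
    _ = Real.sqrt L / B * Real.sqrt n := by ring
end

section
/- Let f be continuous on [-1,1], F(z) = f(Re z) on 𝕋, and let L(z) ∈ Λ_{-n,n-1} be the Laurent Lagrange interpolant of F at the 2n nodes z_1,...,z_n, conj(z_1),...,conj(z_n) (z_j ∈ 𝕋, Im z_j > 0, x_j = Re z_j distinct). Then for z ∈ 𝕋 and x = Re z, L(z) = ∑_{j=1}^n f(x_j) p_n(x)/(p_n'(x_j)(x - x_j)), where p_n(x) = ∏_{j=1}^n (x - x_j); i.e., the restriction of L to 𝕋 equals the classical Lagrange interpolation polynomial l_{n-1}(f;x) composed with x = Re z. -/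
open Finset

/-- `T` is a Laurent polynomial in `Λ_{-p,q} = span{z^k : -p ≤ k ≤ q}`. -/
def IsLaurent (p q : ℕ) (T : ℂ → ℂ) : Prop :=
  ∃ c : ℤ → ℂ, ∀ z : ℂ, z ≠ 0 →
    T z = ∑ k ∈ Finset.Icc (-(p : ℤ)) (q : ℤ), c k * z ^ k

theorem stmt13 (n : ℕ) (hn : 1 ≤ n) (f : ℝ → ℝ)
    (hf : ContinuousOn f (Set.Icc (-1) 1))
    (z : Fin n → ℂ) (hz : ∀ j, ‖z j‖ = 1)
    (him : ∀ j, 0 < (z j).im)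
    (x : Fin n → ℝ) (hx : ∀ j, x j = (z j).re) (hxinj : Function.Injective x)
    (L : ℂ → ℂ) (hL : IsLaurent n (n - 1) L)
    (hint1 : ∀ j, L (z j) = (f (x j) : ℂ))
    (hint2 : ∀ j, L ((starRingEnd ℂ) (z j)) = (f (x j) : ℂ))
    (pn : ℝ → ℝ) (hpn : pn = fun t => ∏ j, (t - x j)) :
    ∀ w : ℂ, ‖w‖ = 1 →
      L w = ((∑ j, f (x j) * (∏ k ∈ Finset.univ.erase j, (w.re - x k)) /
        deriv pn (x j) : ℝ) : ℂ) := by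
  classical
  obtain ⟨c, hc⟩ := hL
  -- the denominators
  set D : Fin n → ℝ := fun j => ∏ k ∈ Finset.univ.erase j, (x j - x k) with hDdef
  have hD : ∀ j, D j ≠ 0 := by
    intro j
    refine Finset.prod_ne_zero_iff.2 fun k hk => sub_ne_zero.2 fun h => ?_
    exact (Finset.mem_erase.1 hk).1 (hxinj h.symm)
  have hpn' : pn = fun t => (Lagrange.nodal Finset.univ x).eval t := by
    funext t; rw [hpn]; simp [Lagrange.eval_nodal]
  have hderiv : ∀ j, deriv pn (x j) = D j := by
    intro j
    rw [hpn']
    rw [Polynomial.deriv, Lagrange.eval_nodal_derivative_eval_node_eq (Finset.mem_univ j),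
      Lagrange.eval_nodal]
  -- coefficients of the Lagrange interpolant
  set a : Fin n → ℂ := fun j => ((f (x j) / D j : ℝ) : ℂ) with hadef
  -- the polynomial equal to w^n * L w
  set P1 : Polynomial ℂ :=
    ∑ k ∈ Finset.Icc (-(n : ℤ)) ((n - 1 : ℕ) : ℤ), Polynomial.C (c k) * Polynomial.X ^ (k + n).toNat
    with hP1def
  have hP1eval : ∀ w : ℂ, w ≠ 0 → P1.eval w = w ^ n * L w := by
    intro w hw
    rw [hc w hw, hP1def, Polynomial.eval_finset_sum, Finset.mul_sum]
    refine Finset.sum_congr rfl fun k hk => ?_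
    obtain ⟨hk1, hk2⟩ := Finset.mem_Icc.1 hk
    have hkn : (0 : ℤ) ≤ k + n := by omega
    have : (w : ℂ) ^ (k + n).toNat = w ^ n * w ^ k := by
      have : w ^ (k + n).toNat = w ^ ((k + (n : ℤ)) : ℤ) := by
        rw [← zpow_natCast, Int.toNat_of_nonneg hkn]
      rw [this, zpow_add₀ hw, mul_comm, zpow_natCast]
    simp [this]; ring
  have hP1deg : P1.natDegree ≤ 2 * n - 1 := by
    refine Polynomial.natDegree_sum_le_of_forall_le _ _ fun k hk => ?_
    obtain ⟨hk1, hk2⟩ := Finset.mem_Icc.1 hk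
    refine le_trans (Polynomial.natDegree_C_mul_X_pow_le _ _) ?_
    omega
  -- the factor polynomials
  set q : Fin n → Polynomial ℂ := fun j =>
    ∏ k ∈ Finset.univ.erase j,
      (Polynomial.C (2⁻¹ : ℂ) * Polynomial.X ^ 2 - Polynomial.C ((x k : ℂ)) * Polynomial.X +
        Polynomial.C (2⁻¹ : ℂ)) with hqdef
  set P2 : Polynomial ℂ := Polynomial.X * ∑ j, Polynomial.C (a j) * q j with hP2def
  have hcard : ∀ j : Fin n, (Finset.univ.erase j).card = n - 1 := by
    intro j; rw [Finset.card_erase_of_mem (Finset.mem_univ j)]; simp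
  have hqeval : ∀ (j : Fin n) (w : ℂ), w ≠ 0 →
      (q j).eval w = w ^ (n - 1) * ∏ k ∈ Finset.univ.erase j, ((w + w⁻¹) / 2 - (x k : ℂ)) := by
    intro j w hw
    rw [hqdef]
    simp only [Polynomial.eval_prod, Polynomial.eval_add, Polynomial.eval_sub,
      Polynomial.eval_mul, Polynomial.eval_C, Polynomial.eval_pow, Polynomial.eval_X]
    have : ∀ k ∈ Finset.univ.erase j,
        (2⁻¹ : ℂ) * w ^ 2 - (x k : ℂ) * w + 2⁻¹ = w * ((w + w⁻¹) / 2 - (x k : ℂ)) := by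
      intro k _; field_simp; ring
    rw [Finset.prod_congr rfl this, Finset.prod_mul_distrib, Finset.prod_const, hcard j]
  have hP2eval : ∀ w : ℂ, w ≠ 0 →
      P2.eval w = w ^ n * ∑ j, a j * ∏ k ∈ Finset.univ.erase j, ((w + w⁻¹) / 2 - (x k : ℂ)) := by
    intro w hw
    rw [hP2def]
    simp only [Polynomial.eval_mul, Polynomial.eval_X, Polynomial.eval_finset_sum,
      Polynomial.eval_C]
    rw [Finset.mul_sum, Finset.mul_sum]
    refine Finset.sum_congr rfl fun j _ => ?_
    rw [hqeval j w hw]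
    have hwn : w ^ n = w * w ^ (n - 1) := by
      rw [← pow_succ']; congr 1; omega
    rw [hwn]; ring
  have hP2deg : P2.natDegree ≤ 2 * n - 1 := by
    rw [hP2def]
    refine le_trans (Polynomial.natDegree_mul_le) ?_
    have h1 : (Polynomial.X : Polynomial ℂ).natDegree = 1 := Polynomial.natDegree_X
    have h2 : (∑ j, Polynomial.C (a j) * q j).natDegree ≤ 2 * (n - 1) := by
      refine Polynomial.natDegree_sum_le_of_forall_le _ _ fun j _ => ?_
      refine le_trans (Polynomial.natDegree_C_mul_le _ _) ?_
      rw [hqdef]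
      refine le_trans (Polynomial.natDegree_prod_le _ _) ?_
      have : ∀ k ∈ Finset.univ.erase j,
          (Polynomial.C (2⁻¹ : ℂ) * Polynomial.X ^ 2 - Polynomial.C ((x k : ℂ)) * Polynomial.X +
            Polynomial.C (2⁻¹ : ℂ)).natDegree ≤ 2 := by
        intro k _; compute_degree
      refine le_trans (Finset.sum_le_sum this) ?_
      rw [Finset.sum_const, hcard j, smul_eq_mul]; omega
    omega
  -- the value of the Lagrange sum at the nodes
  have hS : ∀ j : Fin n,
      (∑ i, a i * ∏ k ∈ Finset.univ.erase i, (((x j : ℝ) : ℂ) - (x k : ℂ))) = (f (x j) : ℂ) := by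
    intro j
    rw [Finset.sum_eq_single j]
    · have : (∏ k ∈ Finset.univ.erase j, (((x j : ℝ) : ℂ) - (x k : ℂ))) = ((D j : ℝ) : ℂ) := by
        rw [hDdef]; push_cast; rfl
      rw [this, hadef]
      have hDj : ((D j : ℝ) : ℂ) ≠ 0 := by exact_mod_cast hD j
      push_cast
      field_simp
    · intro i _ hij
      refine mul_eq_zero_of_right _ ?_
      refine Finset.prod_eq_zero (Finset.mem_erase.2 ⟨hij.symm, Finset.mem_univ j⟩) ?_
      simp
    · intro h; exact absurd (Finset.mem_univ j) h
  -- on the unit circle, (w + w⁻¹)/2 = re w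
  have hreal : ∀ w : ℂ, ‖w‖ = 1 → (w + w⁻¹) / 2 = ((w.re : ℝ) : ℂ) := by
    intro w hw
    have : w⁻¹ = (starRingEnd ℂ) w := Complex.inv_eq_conj hw
    rw [this, Complex.add_conj]
    push_cast
    ring
  have hzne : ∀ j, z j ≠ 0 := by
    intro j h
    have := hz j
    rw [h] at this
    simp at this
  -- P1 - P2 vanishes at 2n distinct points
  set g : Fin n ⊕ Fin n → ℂ := fun i => Sum.elim z (fun j => (starRingEnd ℂ) (z j)) i with hgdef
  have hzinj : Function.Injective z := by
    intro i j h
    exact hxinj (by rw [hx, hx, h])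
  have hginj : Function.Injective g := by
    intro i j h
    rcases i with i | i <;> rcases j with j | j <;> simp only [hgdef, Sum.elim_inl, Sum.elim_inr] at h
    · exact congrArg Sum.inl (hzinj h)
    · exfalso
      have := congrArg Complex.im h
      simp [Complex.conj_im] at this
      have h1 := him i; have h2 := him j; linarith
    · exfalso
      have := congrArg Complex.im h
      simp [Complex.conj_im] at this
      have h1 := him i; have h2 := him j; linarith
    · exact congrArg Sum.inr (hzinj ((starRingEnd ℂ).injective h))
  have hPQ : P1 - P2 = 0 := by
    refine Polynomial.eq_zero_of_natDegree_lt_card_of_eval_eq_zero _ hginj ?_ ?_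
    · rintro (j | j) <;>
        simp only [hgdef, Sum.elim_inl, Sum.elim_inr, Polynomial.eval_sub]
      · have hne := hzne j
        rw [hP1eval _ hne, hP2eval _ hne, hreal _ (hz j), ← hx j, hS j, hint1 j, sub_self]
      · have hne : (starRingEnd ℂ) (z j) ≠ 0 := by
          simp only [ne_eq, map_eq_zero]; exact hzne j
        have habs : ‖(starRingEnd ℂ) (z j)‖ = 1 := by
          rw [Complex.norm_conj]; exact hz j
        have hre : ((starRingEnd ℂ) (z j)).re = x j := by rw [Complex.conj_re, hx]
        rw [hP1eval _ hne, hP2eval _ hne, hreal _ habs, hre, hS j, hint2 j, sub_self]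
    · refine lt_of_le_of_lt (Polynomial.natDegree_sub_le _ _) ?_
      have : Fintype.card (Fin n ⊕ Fin n) = n + n := by simp
      rw [this]
      omega
  have hP12 : P1 = P2 := by rwa [sub_eq_zero] at hPQ
  -- conclude
  intro w hw
  have hwne : w ≠ 0 := by intro h; rw [h] at hw; simpa using hw
  have hwn : w ^ n ≠ 0 := pow_ne_zero _ hwne
  have hLw : L w = ∑ j, a j * ∏ k ∈ Finset.univ.erase j, (((w.re : ℝ) : ℂ) - (x k : ℂ)) := by
    have := congrArg (Polynomial.eval w) hP12
    rw [hP1eval _ hwne, hP2eval _ hwne, hreal _ hw] at this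
    exact mul_left_cancel₀ hwn this
  rw [hLw]
  push_cast
  refine Finset.sum_congr rfl fun j _ => ?_
  rw [hderiv j, hadef]
  push_cast
  ring
end

section
/- Let z_1, ..., z_n be the n-th roots of a complex number τ with |τ| = 1, so W_n(z) = z^n - τ. Then for every z on the unit circle: |W_n'(z)|/n = 1, and (|W_n(z)|²/n²) ∑_{j=1}^n 1/|z - z_j|² ≤ 1 (for z ∉ {z_1,...,z_n}). -/
open Finset Complex Polynomial

theorem stmt17 (n : ℕ) (hn : 1 ≤ n) (τ : ℂ) (hτ : ‖τ‖ = 1)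
    (z : Fin n → ℂ) (hz : ∀ j, z j ^ n = τ) (hinj : Function.Injective z)
    (W : ℂ → ℂ) (hW : W = fun w => w ^ n - τ) :
    ∀ w : ℂ, ‖w‖ = 1 →
      ‖deriv W w‖ / n = 1 ∧
      (w ^ n ≠ τ →
        (‖W w‖) ^ 2 / (n : ℝ) ^ 2 *
          ∑ j, 1 / (‖w - z j‖) ^ 2 ≤ 1) := by
  subst hW
  have hn0 : n ≠ 0 := by omega
  have hτ0 : τ ≠ 0 := by
    intro h; rw [h] at hτ; simp at hτ
  have hz0 : ∀ j, z j ≠ 0 := by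
    intro j h
    apply hτ0
    rw [← hz j, h, zero_pow hn0]
  have hzabs : ∀ j, ‖z j‖ = 1 := by
    intro j
    have h1 : ‖z j‖ ^ n = 1 := by
      rw [← norm_pow, hz j, hτ]
    have h2 : (0:ℝ) ≤ ‖z j‖ := (norm_nonneg _)
    have := (pow_left_inj₀ h2 zero_le_one hn0).mp (by rw [h1, one_pow])
    exact this
  obtain ⟨ω, hω⟩ : ∃ ω : ℂ, IsPrimitiveRoot ω n := ⟨_, Complex.isPrimitiveRoot_exp n hn0⟩
  have hω0 : ω ≠ 0 := hω.ne_zero hn0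
  -- the image of z is the full nthRoots finset
  have hcard : (Finset.image z Finset.univ).card = n := by
    rw [Finset.card_image_of_injective _ hinj, Finset.card_univ, Fintype.card_fin]
  have hF : (Polynomial.nthRoots n τ).toFinset = Finset.image z Finset.univ := by
    refine (Finset.eq_of_subset_of_card_le ?_ ?_).symm
    · intro r hr
      rw [Finset.mem_image] at hr
      obtain ⟨j, _, rfl⟩ := hr
      rw [Multiset.mem_toFinset, Polynomial.mem_nthRoots (by omega)]
      exact hz j
    · rw [hcard]
      exact le_trans (Multiset.toFinset_card_le _) (Polynomial.card_nthRoots n τ)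
  set F := (Polynomial.nthRoots n τ).toFinset with hFdef
  have hmul : Finset.image (fun r => ω * r) F = F := by
    apply Finset.eq_of_subset_of_card_le
    · intro r hr
      rw [Finset.mem_image] at hr
      obtain ⟨s, hs, rfl⟩ := hr
      rw [Multiset.mem_toFinset, Polynomial.mem_nthRoots (by omega)] at hs ⊢
      rw [mul_pow, hω.pow_eq_one, one_mul, hs]
    · rw [Finset.card_image_of_injective _ (mul_right_injective₀ hω0)]
  have hsum : ∀ m : ℤ, ¬ ((n:ℤ) ∣ m) → ∑ j, (z j) ^ m = 0 := by
    intro m hm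
    have h1 : ∑ j, (z j) ^ m = ∑ r ∈ F, r ^ m := by
      rw [hF, Finset.sum_image (fun a _ b _ h => hinj h)]
    have h2 : ∑ r ∈ F, r ^ m = ω ^ m * ∑ r ∈ F, r ^ m := by
      conv_lhs => rw [← hmul]
      rw [Finset.sum_image (fun a _ b _ h => mul_right_injective₀ hω0 h)]
      rw [Finset.mul_sum]
      exact Finset.sum_congr rfl fun r _ => mul_zpow ω r m
    have h3 : ω ^ m ≠ 1 := fun h => hm ((hω.zpow_eq_one_iff_dvd m).mp h)
    have h4 : (ω ^ m - 1) * ∑ r ∈ F, r ^ m = 0 := by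
      rw [sub_mul, one_mul, ← h2, sub_self]
    rw [h1]
    rcases mul_eq_zero.mp h4 with h | h
    · exact absurd (by linear_combination h) h3
    · exact h
  intro w hw
  have hw0 : w ≠ 0 := by
    intro h; rw [h] at hw; simp at hw
  have hconjinv : ∀ u : ℂ, ‖u‖ = 1 → (starRingEnd ℂ) u = u⁻¹ := by
    intro u hu
    rw [Complex.inv_def, Complex.normSq_eq_norm_sq, hu]
    simp
  constructor
  · have hd : deriv (fun w : ℂ => w ^ n - τ) w = n * w ^ (n - 1) := by
      rw [deriv_sub_const, deriv_pow_field]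
    rw [hd, norm_mul, norm_pow, hw, one_pow, mul_one, Complex.norm_natCast]
    exact div_self (by exact_mod_cast hn0)
  · intro hwτ
    have hwz : ∀ j, w - z j ≠ 0 := by
      intro j h
      exact hwτ (by rw [sub_eq_zero.mp h, hz j])
    set g : Fin n → ℂ := fun j => ∑ i ∈ Finset.range n, (w / z j) ^ i with hg
    -- Step A : factorization
    have habs : ∀ j, ‖w ^ n - τ‖ ^ 2 * (1 / ‖w - z j‖ ^ 2)
        = Complex.normSq (g j) := by
      intro j
      have hfac : w ^ n - τ = (w - z j) * (z j ^ (n - 1) * g j) := by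
        have hgj : z j ^ (n - 1) * g j = ∑ i ∈ Finset.range n, w ^ i * z j ^ (n - 1 - i) := by
          rw [hg]
          simp only
          rw [Finset.mul_sum]
          refine Finset.sum_congr rfl fun i hi => ?_
          rw [Finset.mem_range] at hi
          have h2 : z j ^ (n - 1 - i) * z j ^ i = z j ^ (n - 1) := by
            rw [← pow_add]; congr 1; omega
          rw [div_pow, mul_div_assoc', div_eq_iff (pow_ne_zero i (hz0 j)), ← h2]
          ring
        have h1 := geom_sum₂_mul w (z j) n
        rw [hz j] at h1
        rw [← h1, hgj, mul_comm]
      have habsj : ‖z j‖ ^ (n-1) = 1 := by rw [hzabs j, one_pow]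
      rw [hfac, norm_mul, norm_mul, norm_pow, habsj, one_mul, ← Complex.sq_norm]
      have hB : ‖w - z j‖ ≠ 0 := norm_ne_zero_iff.mpr (hwz j)
      field_simp
    -- Step B : the sum of |g j|^2 equals n^2
    have hinner : ∀ i ∈ Finset.range n, ∀ k ∈ Finset.range n,
        ∑ j, (w / z j) ^ ((i:ℤ) - k) = if i = k then (n:ℂ) else 0 := by
      intro i hi k hk
      by_cases h : i = k
      · subst h; simp
      · rw [if_neg h]
        rw [Finset.mem_range] at hi hk
        have hm : ¬ ((n:ℤ) ∣ (i:ℤ) - k) := by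
          intro hd
          have h0 : ((i:ℤ) - k) = 0 := Int.eq_zero_of_abs_lt_dvd hd (by
            rw [abs_lt]; omega)
          omega
        have hcalc : ∑ j, (w / z j) ^ ((i:ℤ) - k)
            = w ^ ((i:ℤ) - k) * ∑ j, (z j) ^ (-((i:ℤ) - k)) := by
          rw [Finset.mul_sum]
          refine Finset.sum_congr rfl fun j _ => ?_
          rw [div_zpow, zpow_neg, div_eq_mul_inv]
        have hm' : ¬ ((n:ℤ) ∣ -((i:ℤ) - k)) := by rwa [dvd_neg]
        rw [hcalc, hsum _ hm', mul_zero]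
    have hC : ∑ j, (Complex.normSq (g j) : ℂ) = (n:ℂ) * n := by
      have hgc : ∀ j, (Complex.normSq (g j) : ℂ)
          = ∑ i ∈ Finset.range n, ∑ k ∈ Finset.range n, (w / z j) ^ ((i:ℤ) - k) := by
        intro j
        have hu0 : w / z j ≠ 0 := div_ne_zero hw0 (hz0 j)
        have huabs : ‖w / z j‖ = 1 := by
          rw [norm_div, hw, hzabs j, div_one]
        have hconjg : (starRingEnd ℂ) (g j) = ∑ k ∈ Finset.range n, ((w / z j)⁻¹) ^ k := by
          rw [hg, map_sum]
          exact Finset.sum_congr rfl fun k _ => by rw [map_pow, hconjinv _ huabs]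
        rw [← Complex.mul_conj, hconjg, hg, Finset.sum_mul_sum]
        refine Finset.sum_congr rfl fun i _ => Finset.sum_congr rfl fun k _ => ?_
        rw [inv_pow, ← zpow_natCast (w / z j) i, ← zpow_natCast (w / z j) k, ← zpow_neg,
          ← zpow_add₀ hu0, ← sub_eq_add_neg]
      calc ∑ j, (Complex.normSq (g j) : ℂ)
          = ∑ j, ∑ i ∈ Finset.range n, ∑ k ∈ Finset.range n, (w / z j) ^ ((i:ℤ) - k) :=
            Finset.sum_congr rfl fun j _ => hgc j
        _ = ∑ i ∈ Finset.range n, ∑ j, ∑ k ∈ Finset.range n, (w / z j) ^ ((i:ℤ) - k) :=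
            by rw [Finset.sum_comm]
        _ = ∑ i ∈ Finset.range n, ∑ k ∈ Finset.range n, ∑ j, (w / z j) ^ ((i:ℤ) - k) :=
            Finset.sum_congr rfl fun i _ => by rw [Finset.sum_comm]
        _ = ∑ i ∈ Finset.range n, ∑ k ∈ Finset.range n, if i = k then (n:ℂ) else 0 :=
            Finset.sum_congr rfl fun i hi => Finset.sum_congr rfl fun k hk =>
              hinner i hi k hk
        _ = ∑ i ∈ Finset.range n, (n:ℂ) := Finset.sum_congr rfl fun i hi => by
            rw [Finset.sum_ite_eq (Finset.range n) i fun _ => (n:ℂ), if_pos hi]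
        _ = (n:ℂ) * n := by
            rw [Finset.sum_const, Finset.card_range, nsmul_eq_mul]
    have hCreal : ∑ j, Complex.normSq (g j) = (n:ℝ) * n := by
      have := hC
      push_cast at this ⊢
      exact_mod_cast this
    -- conclude
    have hn2 : ((n:ℝ)) ^ 2 ≠ 0 := by positivity
    have : ‖(fun w => w ^ n - τ) w‖ ^ 2 / (n:ℝ) ^ 2
        * ∑ j, 1 / ‖w - z j‖ ^ 2 = 1 := by
      simp only
      rw [div_mul_eq_mul_div, Finset.mul_sum]
      rw [Finset.sum_congr rfl fun j _ => habs j, hCreal]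
      field_simp
    rw [this]
end
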